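/- Let K be a field, L the free Lie algebra over K on generators ξ₁,…,ξ_n, and let A, B be a partition of {1,…,n} with B nonempty. Let 𝔰 be the Lie ideal of L generated by the generators ξ_j with j ∈ B. Then every bracket [ξ_i,ξ_j] with i ∈ A and j ∈ B lies in 𝔰, every bracket [ξ_i,ξ_j] with both i, j ∈ B lies in the derived ideal [𝔰,𝔰], and the images of the brackets [ξ_i,ξ_j] with i ∈ A, j ∈ B in the abelianization 𝔰/[𝔰,𝔰] are linearly independent over K. -/

import Mathlib

open LieSubmodule

section

variable (K : Type*) [CommRing K] (L : Type*) [LieRing L] [LieAlgebra K L]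

/-- The derived ideal `[I, I]` of a Lie ideal `I`, viewed as a Lie submodule (for the
ambient `L`-action) of `I`. -/
def derivedLieSubmodule (I : LieIdeal K L) : LieSubmodule K L I :=
  lieSpan K L {z : I | ∃ x y : I, (z : L) = ⁅(x : L), (y : L)⁆}

/-- The abelianization `I/[I,I]` of a Lie ideal `I`. -/
abbrev LieIdealAb (I : LieIdeal K L) : Type _ := I ⧸ derivedLieSubmodule K L I

end

/-- The Lie ideal `𝔰` of the free Lie algebra on `Fin n` generated by the generators `ξ_j`
with `j ∈ B`. -/
noncomputable abbrev genIdealOn (K : Type*) [CommRing K] (n : ℕ) (B : Set (Fin n)) :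
    LieIdeal K (FreeLieAlgebra K (Fin n)) :=
  lieSpan K (FreeLieAlgebra K (Fin n)) (FreeLieAlgebra.of K '' B)

/-- Free 2-step nilpotent-ish Lie algebra on `Fin n`: degree-1 part `Fin n → K` and
degree-2 part `Fin n → Fin n → K`, bracket `[x,y] = x.v ∧ y.v`. -/
structure Nilp2 (K : Type*) (n : ℕ) where
  v : Fin n → K
  t : Fin n → Fin n → K

namespace Nilp2

variable {K : Type*} [CommRing K] {n : ℕ}

@[ext] lemma ext {x y : Nilp2 K n} (hv : x.v = y.v) (ht : x.t = y.t) : x = y := by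
  cases x; cases y; cases hv; cases ht; rfl

instance : Add (Nilp2 K n) := ⟨fun x y => ⟨x.v + y.v, x.t + y.t⟩⟩
instance : Zero (Nilp2 K n) := ⟨⟨0, 0⟩⟩
instance : Neg (Nilp2 K n) := ⟨fun x => ⟨-x.v, -x.t⟩⟩
instance : SMul K (Nilp2 K n) := ⟨fun c x => ⟨c • x.v, c • x.t⟩⟩

@[simp] lemma add_v (x y : Nilp2 K n) : (x + y).v = x.v + y.v := rfl
@[simp] lemma add_t (x y : Nilp2 K n) : (x + y).t = x.t + y.t := rfl
@[simp] lemma zero_v : (0 : Nilp2 K n).v = 0 := rfl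
@[simp] lemma zero_t : (0 : Nilp2 K n).t = 0 := rfl
@[simp] lemma neg_v (x : Nilp2 K n) : (-x).v = -x.v := rfl
@[simp] lemma neg_t (x : Nilp2 K n) : (-x).t = -x.t := rfl
@[simp] lemma smul_v (c : K) (x : Nilp2 K n) : (c • x).v = c • x.v := rfl
@[simp] lemma smul_t (c : K) (x : Nilp2 K n) : (c • x).t = c • x.t := rfl

instance : AddCommGroup (Nilp2 K n) where
  add_assoc a b c := by ext <;> simp [add_assoc]
  zero_add a := by ext <;> simp
  add_zero a := by ext <;> simp
  add_comm a b := by ext <;> simp [add_comm]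
  neg_add_cancel a := by ext <;> simp
  nsmul := nsmulRec
  zsmul := zsmulRec

instance : Module K (Nilp2 K n) where
  one_smul x := by ext <;> simp
  mul_smul c d x := by ext <;> simp [mul_assoc]
  smul_zero c := by ext <;> simp
  smul_add c x y := by ext <;> simp [mul_add]
  add_smul c d x := by ext <;> simp [add_mul]
  zero_smul x := by ext <;> simp

instance : Bracket (Nilp2 K n) (Nilp2 K n) :=
  ⟨fun x y => ⟨0, fun i j => x.v i * y.v j - x.v j * y.v i⟩⟩

@[simp] lemma lie_v (x y : Nilp2 K n) : (⁅x, y⁆ : Nilp2 K n).v = 0 := rfl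
@[simp] lemma lie_t (x y : Nilp2 K n) (i j : Fin n) :
    (⁅x, y⁆ : Nilp2 K n).t i j = x.v i * y.v j - x.v j * y.v i := rfl

instance : LieRing (Nilp2 K n) where
  add_lie x y z := by ext i j <;> simp <;> ring
  lie_add x y z := by ext i j <;> simp <;> ring
  lie_self x := by ext i j <;> simp [mul_comm]
  leibniz_lie x y z := by ext i j <;> simp
  
instance : LieAlgebra K (Nilp2 K n) where
  lie_smul c x y := by ext i j <;> simp <;> ring

end Nilp2

section Main

variable {K : Type*} [Field K] {n : ℕ} (B : Set (Fin n))

/-- The canonical hom to the 2-step nilpotent algebra. -/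
noncomputable def nilpHom : FreeLieAlgebra K (Fin n) →ₗ⁅K⁆ Nilp2 K n :=
  FreeLieAlgebra.lift K (fun i => ⟨Pi.single i 1, 0⟩)

@[simp] lemma nilpHom_of (i : Fin n) :
    (nilpHom (FreeLieAlgebra.of K i) : Nilp2 K n) = ⟨Pi.single i 1, 0⟩ :=
  FreeLieAlgebra.lift_of_apply _ i

/-- degree-1 components of elements of `𝔰` are supported on `B`. -/
lemma nilpHom_v_supp {x : FreeLieAlgebra K (Fin n)} (hx : x ∈ genIdealOn K n B)
    {i : Fin n} (hi : i ∉ B) : (nilpHom x : Nilp2 K n).v i = 0 := by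
  classical
  let I' : LieIdeal K (FreeLieAlgebra K (Fin n)) :=
  { carrier := {x | ∀ i ∉ B, (nilpHom x : Nilp2 K n).v i = 0}
    add_mem' := by
      intro a b ha hb
      intro i hi
      simp only [map_add, Nilp2.add_v, Pi.add_apply, ha i hi, hb i hi, add_zero]
    zero_mem' := by intro i hi; simp [map_zero]
    smul_mem' := by
      intro c a ha i hi
      simp only [map_smul, Nilp2.smul_v, Pi.smul_apply, ha i hi, smul_zero]
    lie_mem := by
      intro z x hx i hi
      simp [LieHom.map_lie] }
  have : genIdealOn K n B ≤ I' := by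
    rw [lieSpan_le]
    rintro _ ⟨j, hj, rfl⟩ i hi
    have hij : i ≠ j := fun h => hi (h ▸ hj)
    simp [Pi.single_apply, hij]
  exact this hx i hi

/-- The Lie submodule of `𝔰` consisting of elements with zero degree-1 image and degree-2
image supported on `B × B`. It contains all brackets of elements of `𝔰`. -/
noncomputable def NN : LieSubmodule K (FreeLieAlgebra K (Fin n)) ↥(genIdealOn K n B) :=
  { carrier := {w | (nilpHom (w : FreeLieAlgebra K (Fin n)) : Nilp2 K n).v = 0 ∧
      ∀ i ∉ B, ∀ j, (nilpHom (w : FreeLieAlgebra K (Fin n)) : Nilp2 K n).t i j = 0}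
    add_mem' := by
      rintro a b ⟨ha1, ha2⟩ ⟨hb1, hb2⟩
      refine ⟨?_, ?_⟩
      · simp [map_add, ha1, hb1]
      · intro i hi j
        simp [map_add, ha2 i hi j, hb2 i hi j]
    zero_mem' := by
      refine ⟨?_, ?_⟩ <;> simp [map_zero]
    smul_mem' := by
      rintro c a ⟨ha1, ha2⟩
      refine ⟨?_, ?_⟩
      · simp [map_smul, ha1]
      · intro i hi j
        simp [map_smul, ha2 i hi j]
    lie_mem := by
      rintro z x ⟨h1, h2⟩
      refine ⟨?_, ?_⟩
      · simp [LieHom.map_lie]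
      · intro i hi j
        simp [LieHom.map_lie, h1] }

lemma derived_le_NN :
    derivedLieSubmodule K (FreeLieAlgebra K (Fin n)) (genIdealOn K n B) ≤ NN B := by
  rw [derivedLieSubmodule, lieSpan_le]
  rintro z ⟨x, y, hz⟩
  refine ⟨?_, ?_⟩
  · simp [hz, LieHom.map_lie]
  · intro i hi j
    simp [hz, LieHom.map_lie, nilpHom_v_supp B x.2 hi, nilpHom_v_supp B y.2 hi]

/-- Reading off the `(a, b)` matrix entries, `a ∈ A`, `b ∈ B`. -/
noncomputable def hmap (A : Set (Fin n)) : ↥(genIdealOn K n B) →ₗ[K] ((↥A × ↥B) → K) where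
  toFun w q := (nilpHom (w : FreeLieAlgebra K (Fin n)) : Nilp2 K n).t q.1 q.2
  map_add' a b := by funext q; simp [map_add]
  map_smul' c a := by funext q; simp [map_smul]

@[simp] lemma hmap_apply (A : Set (Fin n)) (w : ↥(genIdealOn K n B)) (q : ↥A × ↥B) :
    hmap B A w q = (nilpHom (w : FreeLieAlgebra K (Fin n)) : Nilp2 K n).t q.1 q.2 := rfl

end Main

/-- Let `K` be a field, `L` the free Lie algebra over `K` on `ξ₁,…,ξ_n`, `A, B` a partition
of `{1,…,n}` with `B` nonempty, and `𝔰` the Lie ideal generated by the `ξ_j`, `j ∈ B`.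
Then every `[ξ_i, ξ_j]` with `i ∈ A`, `j ∈ B` lies in `𝔰`; every `[ξ_i, ξ_j]` with
`i, j ∈ B` lies in the derived ideal `[𝔰, 𝔰]`; and the images of the `[ξ_i, ξ_j]` with
`i ∈ A`, `j ∈ B` in the abelianization `𝔰/[𝔰,𝔰]` are linearly independent over `K`. -/
theorem brackets_in_ideal_linearly_independent (K : Type*) [Field K] (n : ℕ)
    (A B : Set (Fin n)) (hunion : A ∪ B = Set.univ) (hdisj : Disjoint A B)
    (hB : B.Nonempty) :
    (∀ i ∈ A, ∀ j ∈ B,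
      ⁅FreeLieAlgebra.of K i, FreeLieAlgebra.of K j⁆ ∈ genIdealOn K n B) ∧
    (∀ i ∈ B, ∀ j ∈ B,
      ⁅FreeLieAlgebra.of K i, FreeLieAlgebra.of K j⁆ ∈
        (⁅genIdealOn K n B, genIdealOn K n B⁆ : LieIdeal K (FreeLieAlgebra K (Fin n)))) ∧
    LinearIndependent K (fun p : ↥A × ↥B =>
      LieSubmodule.Quotient.mk
        (N := derivedLieSubmodule K (FreeLieAlgebra K (Fin n)) (genIdealOn K n B))
        ⁅FreeLieAlgebra.of K (p.1 : Fin n),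
          (⟨FreeLieAlgebra.of K (p.2 : Fin n),
            subset_lieSpan (Set.mem_image_of_mem _ p.2.2)⟩ : genIdealOn K n B)⁆) := by
  classical
  refine ⟨?_, ?_, ?_⟩
  · intro i _ j hj
    exact (genIdealOn K n B).lie_mem (subset_lieSpan (Set.mem_image_of_mem _ hj))
  · intro i hi j hj
    exact LieSubmodule.lie_mem_lie (subset_lieSpan (Set.mem_image_of_mem _ hi))
      (subset_lieSpan (Set.mem_image_of_mem _ hj))
  · have hker : (derivedLieSubmodule K (FreeLieAlgebra K (Fin n))
        (genIdealOn K n B)).toSubmodule ≤ LinearMap.ker (hmap B A) := by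
      intro w hw
      have hN : w ∈ NN B := derived_le_NN B hw
      simp only [LinearMap.mem_ker]
      funext q
      have ha : (q.1 : Fin n) ∉ B := fun h => Set.disjoint_left.mp hdisj q.1.2 h
      exact hN.2 _ ha _
    set G := Submodule.liftQ (derivedLieSubmodule K (FreeLieAlgebra K (Fin n))
        (genIdealOn K n B)).toSubmodule (hmap B A) hker with hGdef
    apply LinearIndependent.of_comp G
    have hsingle : LinearIndependent K
        (fun p : ↥A × ↥B => (Pi.single p 1 : ↥A × ↥B → K)) := by
      have he : (fun p : ↥A × ↥B => (Pi.single p 1 : ↥A × ↥B → K)) =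
          ⇑(Pi.basisFun K (↥A × ↥B)) := funext fun p => (Pi.basisFun_apply K _ p).symm
      rw [he]
      exact (Pi.basisFun K (↥A × ↥B)).linearIndependent
    convert hsingle using 1
    funext p
    obtain ⟨⟨pi, hpi⟩, ⟨pj, hpj⟩⟩ := p
    show G (Submodule.Quotient.mk _) = _
    rw [Submodule.liftQ_apply]
    funext q
    obtain ⟨⟨qa, hqa⟩, ⟨qb, hqb⟩⟩ := q
    have haj : qa ≠ pj := fun h => Set.disjoint_left.mp hdisj hqa (h ▸ hpj)
    have hij : pi ≠ pj := fun h => Set.disjoint_left.mp hdisj hpi (h ▸ hpj)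
    rw [hmap_apply]
    show (nilpHom ⁅FreeLieAlgebra.of K pi, FreeLieAlgebra.of K pj⁆ : Nilp2 K n).t qa qb = _
    rw [LieHom.map_lie, nilpHom_of, nilpHom_of, Nilp2.lie_t]
    simp only [Pi.single_apply, Prod.mk.injEq, Subtype.mk.injEq]
    by_cases h1 : qa = pi <;> by_cases h2 : qb = pj <;>
      simp [h1, h2, haj, hij, Prod.ext_iff, Subtype.ext_iff]
    all_goals rfl
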